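/- Let μ ∈ (0, 1) and R₁, R₂ > 0. Set σ = μ(3 + μ²)/(1 + 3μ²), ω₀ = √((1 − μ²)³/(1 + 3μ²)), L³ = ω₀·R₁·R₂²·√(σ(1 + σ)μ³/(1 − σ)), 𝒟 = 2√3·μ·R₂·(1 − μ²)/√(1 + 3μ²), 𝒥₁ = (π/2)·(L³R₁/((1 − σ)R₂))·√(σ/μ³), and A = 8π²L³. Then A = 4π·√(π𝒥₁𝒟³/(3√3)). -/

import Mathlib

open Real

/-- Two nonnegative reals with equal squares are equal. -/
lemma sq_eq_of_nonneg {a b : ℝ} (ha : 0 ≤ a) (hb : 0 ≤ b) (h : a ^ 2 = b ^ 2) : a = b := by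
  nlinarith [sq_nonneg (a - b), sq_nonneg (a + b)]

/-- The extreme singly-spinning dipole black ring saturates the area–angular
momentum–dipole charge inequality of Theorem 2.2(a): `A = 4π√(π𝒥₁𝒟³/(3√3))`. -/
theorem stmt10 (μ R1 R2 σ ω L3 D J1 A : ℝ)
    (hμ : μ ∈ Set.Ioo (0 : ℝ) 1) (hR1 : 0 < R1) (hR2 : 0 < R2)
    (hσ : σ = μ * (3 + μ ^ 2) / (1 + 3 * μ ^ 2))
    (hω : ω = Real.sqrt ((1 - μ ^ 2) ^ 3 / (1 + 3 * μ ^ 2)))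
    (hL : L3 = ω * R1 * R2 ^ 2 * Real.sqrt (σ * (1 + σ) * μ ^ 3 / (1 - σ)))
    (hD : D = 2 * Real.sqrt 3 * μ * R2 * (1 - μ ^ 2) / Real.sqrt (1 + 3 * μ ^ 2))
    (hJ : J1 = π / 2 * (L3 * R1 / ((1 - σ) * R2)) * Real.sqrt (σ / μ ^ 3))
    (hA : A = 8 * π ^ 2 * L3) :
    A = 4 * π * Real.sqrt (π * J1 * D ^ 3 / (3 * Real.sqrt 3)) := by
  obtain ⟨hμ0, hμ1⟩ := hμ
  have hden : (0:ℝ) < 1 + 3 * μ ^ 2 := by nlinarith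
  have hσ0 : 0 < σ := by rw [hσ]; positivity
  have h1σ : 0 < 1 - σ := by
    rw [hσ, sub_pos, div_lt_one hden]
    nlinarith [pow_pos (sub_pos.mpr hμ1) 3]
  have h1σ' : (0:ℝ) < 1 + σ := by linarith
  have hμ2 : 0 < 1 - μ ^ 2 := by nlinarith
  -- abbreviations for the square roots
  set t := Real.sqrt 3 with ht
  set u := Real.sqrt (1 + 3 * μ ^ 2) with hu
  set v := Real.sqrt (σ * (1 + σ) * μ ^ 3 / (1 - σ)) with hv
  set s := Real.sqrt (σ / μ ^ 3) with hs
  have ht2 : t ^ 2 = 3 := Real.sq_sqrt (by norm_num)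
  have hu2 : u ^ 2 = 1 + 3 * μ ^ 2 := Real.sq_sqrt hden.le
  have hw2 : ω ^ 2 = (1 - μ ^ 2) ^ 3 / (1 + 3 * μ ^ 2) := by
    rw [hω]; exact Real.sq_sqrt (by positivity)
  have hv2 : v ^ 2 = σ * (1 + σ) * μ ^ 3 / (1 - σ) := Real.sq_sqrt (by positivity)
  have hs2 : s ^ 2 = σ / μ ^ 3 := Real.sq_sqrt (by positivity)
  have ht0 : 0 < t := Real.sqrt_pos.mpr (by norm_num)
  have hu0 : 0 < u := Real.sqrt_pos.mpr hden
  have hv0 : 0 ≤ v := Real.sqrt_nonneg _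
  have hs0 : 0 ≤ s := Real.sqrt_nonneg _
  have hw0 : 0 ≤ ω := hω ▸ Real.sqrt_nonneg _
  -- the basic polynomial identity behind balance
  have hkey2 : (1 - σ) * (1 + σ) * (1 + 3 * μ ^ 2) ^ 2 = (1 - μ ^ 2) ^ 3 := by
    rw [hσ]; field_simp; ring
  -- key identity among the square roots
  have key : s * μ ^ 3 * (1 - μ ^ 2) ^ 3 = (1 - σ) * u ^ 3 * ω * v := by
    apply sq_eq_of_nonneg (by positivity) (by positivity)
    have e1 : (s * μ ^ 3 * (1 - μ ^ 2) ^ 3) ^ 2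
        = s ^ 2 * μ ^ 6 * (1 - μ ^ 2) ^ 6 := by ring
    have e2 : ((1 - σ) * u ^ 3 * ω * v) ^ 2
        = (1 - σ) ^ 2 * (u ^ 2) ^ 3 * ω ^ 2 * v ^ 2 := by ring
    rw [e1, e2, hs2, hu2, hw2, hv2]
    have l1 : σ / μ ^ 3 * μ ^ 6 * (1 - μ ^ 2) ^ 6 = σ * μ ^ 3 * (1 - μ ^ 2) ^ 6 := by
      field_simp
    have l2 : (1 - σ) ^ 2 * (1 + 3 * μ ^ 2) ^ 3 * ((1 - μ ^ 2) ^ 3 / (1 + 3 * μ ^ 2))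
        * (σ * (1 + σ) * μ ^ 3 / (1 - σ))
        = (1 - σ) * (1 + σ) * (1 + 3 * μ ^ 2) ^ 2 * (σ * μ ^ 3 * (1 - μ ^ 2) ^ 3) := by
      field_simp
    rw [l1, l2, hkey2]
    ring
  have hL0 : 0 ≤ L3 := by rw [hL]; positivity
  have ht3 : t ^ 3 = 3 * t := by
    rw [show t ^ 3 = t ^ 2 * t by ring, ht2]
  have hD3 : D ^ 3 = 24 * t * μ ^ 3 * R2 ^ 3 * (1 - μ ^ 2) ^ 3 / u ^ 3 := by
    rw [hD, div_pow, show (2 * t * μ * R2 * (1 - μ ^ 2)) ^ 3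
        = 8 * t ^ 3 * μ ^ 3 * R2 ^ 3 * (1 - μ ^ 2) ^ 3 by ring, ht3]
    ring
  have step : π * J1 * D ^ 3 / (3 * t)
      = 4 * π ^ 2 * L3 * R1 * R2 ^ 2 * (s * μ ^ 3 * (1 - μ ^ 2) ^ 3)
        / ((1 - σ) * u ^ 3) := by
    rw [hJ, hD3]
    field_simp
    ring
  have step2 : 4 * π ^ 2 * L3 * R1 * R2 ^ 2 * ((1 - σ) * u ^ 3 * ω * v)
      / ((1 - σ) * u ^ 3) = 4 * π ^ 2 * L3 * (ω * R1 * R2 ^ 2 * v) := by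
    field_simp
  have hrad : π * J1 * D ^ 3 / (3 * t) = (2 * π * L3) ^ 2 := by
    rw [step, key, step2, ← hL]
    ring
  rw [hrad, Real.sqrt_sq (by positivity), hA]
  ring
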